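/- Let α ∈ (0,1), k > 0, λ ∈ ℂ, s₂ ∈ (0,1), and R₀ > |λ|. Let a, b be bounded holomorphic functions on [−1,1]^{s₂}, let Φ be entire, and let ψ be holomorphic on [−1,1]^{s₂} with ψ([−1,1]^{k,s₂,n+1}) ⊂ [−1,1]^{k,s₂,n} for every integer n ≥ 1. Let D̄ := {z ∈ ℂ : |z| ≤ R₀} and set Λ := ((2+s₂)^α/(α·Γ(α)))·max( ‖a‖_{∞,[−1,1]^{s₂}}·sup_{dist(z,D̄)≤s₂}|Φ′(z)|, ‖a‖_{∞,[−1,1]^{s₂}}·sup_{dist(z,D̄)≤s₂}|Φ(z)| + ‖b‖_{∞,[−1,1]^{s₂}} ). Define ω₁ ≡ 0 on [−1,1]^{k,s₂,1} and, recursively, ω_{n+1}(z) := ((z+1)^α/Γ(α)) ∫₀¹ (1−s)^{α−1}( a(−1+s(z+1))·Φ(ω_n(ψ(−1+s(z+1)))) + b(−1+s(z+1)) ) ds + λ for z ∈ [−1,1]^{k,s₂,n+1}, where (z+1)^α is the principal branch. Assume that for every integer n ≥ 1, ω_n is well defined on [−1,1]^{k,s₂,n} with ω_n([−1,1]^{k,s₂,n})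 ⊂ {z ∈ ℂ : dist(z, D̄) < s₂·n^{−1/k}}. Then for every integer n ≥ 2, sup_{z∈[−1,1]^{k,s₂,n+1}} |ω_{n+1}(z) − ω_n(z)| ≤ Λ · sup_{z∈[−1,1]^{k,s₂,n}} |ω_n(z) − ω_{n−1}(z)|; consequently, if moreover Λ ∈ (0,1), then sup_{z∈[−1,1]^{k,s₂,n+1}} |ω_{n+1}(z) − ω_n(z)| ≤ Λ^{n−1} · sup_{z∈[−1,1]^{k,s₂,2}} |ω₂(z) − ω₁(z)| for every integer n ≥ 1. -/

import Mathlib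

/-- The sector `[q₁,q₂]^{φ,r} = {q₁ + s·e^{iθ} : 0 < s < q₂ − q₁ + r, −φ < θ < φ}`. -/
def sectorAng (q₁ q₂ φ r : ℝ) : Set ℂ :=
  {z : ℂ | ∃ s θ : ℝ, 0 < s ∧ s < q₂ - q₁ + r ∧ -φ < θ ∧ θ < φ ∧
    z = (q₁ : ℂ) + (s : ℂ) * Complex.exp (θ * Complex.I)}

/-- `[q₁,q₂]^r := [q₁,q₂]^{r,r}`. -/
def sectorR (q₁ q₂ r : ℝ) : Set ℂ := sectorAng q₁ q₂ r r

/-- `[q₁,q₂]^{l,r,n} := [q₁,q₂]^{r·n^{−1/l}}`. -/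
noncomputable def sectorN (q₁ q₂ l r : ℝ) (n : ℕ) : Set ℂ :=
  sectorR q₁ q₂ (r * (n : ℝ) ^ (-(1 / l)))

open Complex Metric MeasureTheory intervalIntegral Set

lemma T_eq {R₀ s₂ : ℝ} (hR : 0 ≤ R₀) (hs : 0 ≤ s₂) :
    {z : ℂ | infDist z (closedBall (0:ℂ) R₀) ≤ s₂} = closedBall (0:ℂ) (s₂ + R₀) := by
  rw [← cthickening_closedBall hs hR (0:ℂ)]
  ext z
  rw [mem_cthickening_iff, Set.mem_setOf_eq, infDist,
    ← ENNReal.le_ofReal_iff_toReal_le (infEdist_ne_top ⟨0, by simpa using hR⟩) hs]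

lemma mem_sectorR_iff {r : ℝ} (hrπ : r < Real.pi) (z : ℂ) :
    z ∈ sectorR (-1) 1 r ↔
      z + 1 ≠ 0 ∧ ‖z + 1‖ < 2 + r ∧ |Complex.arg (z + 1)| < r := by
  constructor
  · rintro ⟨s, θ, hs0, hs2, hθ1, hθ2, rfl⟩
    have hθπ : -Real.pi < θ := by nlinarith [Real.pi_pos]
    have hθπ' : θ ≤ Real.pi := by nlinarith [Real.pi_pos]
    have h1 : ((-1:ℝ):ℂ) + s * Complex.exp (θ * I) + 1 = s * Complex.exp (θ * I) := by
      push_cast; ring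
    have habs : ‖(s:ℂ) * Complex.exp (θ * I)‖ = s := by
      rw [norm_mul, Complex.norm_exp]
      simp [Complex.norm_of_nonneg hs0.le, hs0.le]
    have harg : Complex.arg ((s:ℂ) * Complex.exp (θ * I)) = θ := by
      rw [Complex.arg_real_mul _ hs0, Complex.exp_mul_I,
        Complex.arg_cos_add_sin_mul_I ⟨hθπ, hθπ'⟩]
    refine ⟨?_, ?_, ?_⟩
    · rw [h1]
      intro h
      rw [h, norm_zero] at habs; exact hs0.ne' habs.symm
    · push_cast at h1 ⊢
      rw [h1, habs]; linarith
    · push_cast at h1 ⊢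
      rw [h1, harg, abs_lt]; exact ⟨hθ1, hθ2⟩
  · rintro ⟨h0, habs, harg⟩
    refine ⟨‖z+1‖, Complex.arg (z+1), ?_, ?_, ?_, ?_, ?_⟩
    · simpa using h0
    · push_cast; linarith [habs]
    · exact neg_lt_of_abs_lt harg
    · exact lt_of_abs_lt harg
    · have := Complex.norm_mul_exp_arg_mul_I (z+1)
      push_cast
      rw [this]; ring

lemma sectorR_mono {r r' : ℝ} (h : r ≤ r') : sectorR (-1) 1 r ⊆ sectorR (-1) 1 r' := by
  rintro z ⟨s, θ, hs0, hs2, hθ1, hθ2, rfl⟩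
  exact ⟨s, θ, hs0, by linarith, by linarith, by linarith, rfl⟩

lemma isOpen_sectorR {r : ℝ} (hrπ : r < Real.pi) : IsOpen (sectorR (-1) 1 r) := by
  rw [isOpen_iff_mem_nhds]
  intro z hz
  rw [mem_sectorR_iff hrπ] at hz
  obtain ⟨h0, habs, harg⟩ := hz
  have hslit : z + 1 ∈ Complex.slitPlane := by
    rw [Complex.mem_slitPlane_iff]
    by_contra h
    push_neg at h
    obtain ⟨h1, h2⟩ := h
    rcases lt_or_eq_of_le h1 with h1 | h1
    · have : Complex.arg (z+1) = Real.pi := Complex.arg_eq_pi_iff.2 ⟨h1, h2⟩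
      rw [this, abs_of_pos Real.pi_pos] at harg; linarith
    · apply h0
      apply Complex.ext <;> simp [← h1, h2]
  have hc1 : ContinuousAt (fun w : ℂ => ‖w + 1‖) z :=
    (continuous_norm.comp (continuous_id.add continuous_const)).continuousAt
  have hc2 : ContinuousAt (fun w : ℂ => |Complex.arg (w + 1)|) z := by
    have h3 : ContinuousAt (fun w : ℂ => w + 1) z := (continuous_id.add continuous_const).continuousAt
    have h4 : ContinuousAt (fun w : ℂ => Complex.arg (w + 1)) z :=
      Filter.Tendsto.comp (Complex.continuousAt_arg hslit) h3
    exact h4.abs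
  have e1 : ∀ᶠ w in nhds z, ‖w + 1‖ < 2 + r :=
    hc1 (Iio_mem_nhds habs)
  have e2 : ∀ᶠ w in nhds z, |Complex.arg (w + 1)| < r :=
    hc2 (Iio_mem_nhds harg)
  have e0 : ∀ᶠ w in nhds z, w + 1 ≠ 0 := by
    have : ContinuousAt (fun w : ℂ => w + 1) z := (continuous_id.add continuous_const).continuousAt
    exact this.eventually_ne h0
  filter_upwards [e0, e1, e2] with w h0' h1' h2'
  exact (mem_sectorR_iff hrπ w).2 ⟨h0', h1', h2'⟩

lemma line_mem_sectorR {r : ℝ} {z : ℂ} (hz : z ∈ sectorR (-1) 1 r) {t : ℝ}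
    (ht0 : 0 < t) (ht1 : t ≤ 1) : -1 + t * (z + 1) ∈ sectorR (-1) 1 r := by
  obtain ⟨s, θ, hs0, hs2, hθ1, hθ2, rfl⟩ := hz
  refine ⟨t * s, θ, mul_pos ht0 hs0, ?_, hθ1, hθ2, ?_⟩
  · nlinarith
  · push_cast; ring

lemma zero_mem_sectorR {r : ℝ} (hr : 0 < r) : (0:ℂ) ∈ sectorR (-1) 1 r :=
  ⟨1, 0, one_pos, by linarith, by linarith, hr, by simp⟩

lemma abs_add_one_lt {r : ℝ} {z : ℂ} (hz : z ∈ sectorR (-1) 1 r) :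
    ‖z + 1‖ < 2 + r ∧ z + 1 ≠ 0 := by
  obtain ⟨s, θ, hs0, hs2, hθ1, hθ2, rfl⟩ := hz
  have h1 : ((-1:ℝ):ℂ) + s * Complex.exp (θ * I) + 1 = s * Complex.exp (θ * I) := by
    push_cast; ring
  have habs : ‖(s:ℂ) * Complex.exp (θ * I)‖ = s := by
    rw [norm_mul, Complex.norm_exp]
    simp [Complex.norm_of_nonneg hs0.le, hs0.le]
  constructor
  · push_cast at h1 ⊢
    rw [h1, habs]; linarith
  · push_cast at h1 ⊢
    rw [h1]
    intro h
    rw [h, norm_zero] at habs; exact hs0.ne' habs.symm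

lemma re_add_one_pos {r : ℝ} (hr2 : r < Real.pi/2) {z : ℂ} (hz : z ∈ sectorR (-1) 1 r) :
    0 < (z + 1).re := by
  obtain ⟨s, θ, hs0, hs2, hθ1, hθ2, rfl⟩ := hz
  have h1 : ((-1:ℂ)) + s * Complex.exp (θ * I) + 1 = s * Complex.exp (θ * I) := by ring
  have : (((-1:ℝ):ℂ) + s * Complex.exp (θ * I) + 1).re = s * Real.cos θ := by
    push_cast
    rw [h1, Complex.exp_mul_I]
    simp [Complex.mul_re, Complex.cos_ofReal_re, Complex.sin_ofReal_im]
  push_cast at this ⊢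
  rw [this]
  have : 0 < Real.cos θ := Real.cos_pos_of_mem_Ioo ⟨by linarith, by linarith⟩
  positivity

/-- The integrand appearing in the recursion. -/
noncomputable def integrandG (a b Φ ψ w : ℂ → ℂ) (α : ℝ) (lam : ℂ) (z : ℂ) (s : ℝ) : ℂ :=
  (((1 - s) ^ (α - 1) : ℝ) : ℂ) *
    (a (-1 + s * (z + 1)) * Φ (w (ψ (-1 + s * (z + 1)))) + b (-1 + s * (z + 1))) + lam

lemma boundIntegrable {α : ℝ} (hα0 : 0 < α) (hα1 : α < 1) (C L : ℝ) :
    IntervalIntegrable (fun s : ℝ => (1-s)^(α-1) * C + L) volume 0 1 := by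
  have h := (intervalIntegral.intervalIntegrable_rpow' (show (-1:ℝ) < α - 1 by linarith)
    (a := 0) (b := 1)).comp_sub_left 1
  have h2 : IntervalIntegrable (fun s : ℝ => (1-s)^(α-1) * C) volume 0 1 := by
    simpa using h.symm.mul_const C
  exact h2.add intervalIntegrable_const

lemma boundIntegral {α : ℝ} (hα0 : 0 < α) (hα1 : α < 1) (C : ℝ) :
    ∫ s in (0:ℝ)..1, (1-s)^(α-1) * C = C / α := by
  rw [intervalIntegral.integral_mul_const]
  have h1 : (∫ s in (0:ℝ)..1, (1-s)^(α-1)) = ∫ s in (0:ℝ)..1, s^(α-1) := by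
    have := intervalIntegral.integral_comp_sub_left (a := 0) (b := 1) (fun x : ℝ => x ^ (α-1)) 1
    norm_num at this
    exact this
  rw [h1, integral_rpow (Or.inl (by linarith))]
  rw [Real.one_rpow, Real.zero_rpow (by linarith)]
  field_simp
  rw [show α - 1 + 1 = α by ring]
  field_simp
  ring

lemma innerContAt {s₂ r : ℝ} {a b Φ ψ w : ℂ → ℂ} {D : Set ℂ}
    (hπ : s₂ < Real.pi) (hrs : r ≤ s₂)
    (ha : ContinuousOn a (sectorR (-1) 1 s₂)) (hb : ContinuousOn b (sectorR (-1) 1 s₂))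
    (hΦ : Continuous Φ) (hψ : ContinuousOn ψ (sectorR (-1) 1 s₂))
    (hD : IsOpen D) (hw : ContinuousOn w D) (hψD : ∀ u ∈ sectorR (-1) 1 r, ψ u ∈ D)
    {u : ℂ} (hu : u ∈ sectorR (-1) 1 r) :
    ContinuousAt (fun v : ℂ => a v * Φ (w (ψ v)) + b v) u := by
  have hu' : u ∈ sectorR (-1) 1 s₂ := sectorR_mono hrs hu
  have hOp : IsOpen (sectorR (-1) 1 s₂) := isOpen_sectorR hπ
  have haC : ContinuousAt a u := ha.continuousAt (hOp.mem_nhds hu')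
  have hbC : ContinuousAt b u := hb.continuousAt (hOp.mem_nhds hu')
  have hψC : ContinuousAt ψ u := hψ.continuousAt (hOp.mem_nhds hu')
  have hwC : ContinuousAt w (ψ u) := hw.continuousAt (hD.mem_nhds (hψD u hu))
  have hcomp : ContinuousAt (fun v : ℂ => Φ (w (ψ v))) u :=
    Filter.Tendsto.comp hΦ.continuousAt (Filter.Tendsto.comp hwC hψC)
  exact (haC.mul hcomp).add hbC

lemma paramContAt {α s₂ r : ℝ} {a b Φ ψ w : ℂ → ℂ} {lam : ℂ} {D : Set ℂ}
    (hπ : s₂ < Real.pi) (hrs : r ≤ s₂)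
    (ha : ContinuousOn a (sectorR (-1) 1 s₂)) (hb : ContinuousOn b (sectorR (-1) 1 s₂))
    (hΦ : Continuous Φ) (hψ : ContinuousOn ψ (sectorR (-1) 1 s₂))
    (hD : IsOpen D) (hw : ContinuousOn w D) (hψD : ∀ u ∈ sectorR (-1) 1 r, ψ u ∈ D)
    {t : ℝ} (ht : t ∈ Set.Ioc (0:ℝ) 1) {z₀ : ℂ} (hz₀ : z₀ ∈ sectorR (-1) 1 r) :
    ContinuousAt (fun z : ℂ => integrandG a b Φ ψ w α lam z t) z₀ := by
  have hline : ContinuousAt (fun z : ℂ => -1 + (t:ℂ) * (z + 1)) z₀ := by fun_prop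
  have hmem : -1 + (t:ℂ) * (z₀ + 1) ∈ sectorR (-1) 1 r := line_mem_sectorR hz₀ ht.1 ht.2
  have hin := innerContAt hπ hrs ha hb hΦ hψ hD hw hψD hmem
  have hcomp : ContinuousAt
      (fun z : ℂ => a (-1 + t * (z + 1)) * Φ (w (ψ (-1 + t * (z + 1)))) +
        b (-1 + t * (z + 1))) z₀ := Filter.Tendsto.comp hin hline
  exact (continuousAt_const.mul hcomp).add continuousAt_const

lemma sliceContOn {α s₂ r : ℝ} {a b Φ ψ w : ℂ → ℂ} {lam : ℂ} {D : Set ℂ}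
    (hπ : s₂ < Real.pi) (hrs : r ≤ s₂)
    (ha : ContinuousOn a (sectorR (-1) 1 s₂)) (hb : ContinuousOn b (sectorR (-1) 1 s₂))
    (hΦ : Continuous Φ) (hψ : ContinuousOn ψ (sectorR (-1) 1 s₂))
    (hD : IsOpen D) (hw : ContinuousOn w D) (hψD : ∀ u ∈ sectorR (-1) 1 r, ψ u ∈ D)
    {z : ℂ} (hz : z ∈ sectorR (-1) 1 r) :
    ContinuousOn (fun s : ℝ => integrandG a b Φ ψ w α lam z s) (Set.Ioo (0:ℝ) 1) := by
  intro s₀ hs₀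
  apply ContinuousAt.continuousWithinAt
  have hline : ContinuousAt (fun s : ℝ => -1 + (s:ℂ) * (z + 1)) s₀ := by fun_prop
  have hmem : -1 + (s₀:ℂ) * (z + 1) ∈ sectorR (-1) 1 r := line_mem_sectorR hz hs₀.1 hs₀.2.le
  have hin := innerContAt hπ hrs ha hb hΦ hψ hD hw hψD hmem
  have hcomp : ContinuousAt
      (fun s : ℝ => a (-1 + s * (z + 1)) * Φ (w (ψ (-1 + s * (z + 1)))) +
        b (-1 + s * (z + 1))) s₀ := Filter.Tendsto.comp hin hline
  have hcoef : ContinuousAt (fun s : ℝ => (((1 - s) ^ (α - 1) : ℝ) : ℂ)) s₀ := by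
    apply Complex.continuous_ofReal.continuousAt.comp
    have h1 : ContinuousAt (fun x : ℝ => x ^ (α - 1)) (1 - s₀) :=
      Real.continuousAt_rpow_const _ _ (Or.inl (by cases hs₀ with | intro h1 h2 => linarith))
    exact Filter.Tendsto.comp h1 ((continuous_const.sub continuous_id).continuousAt)
  exact (hcoef.mul hcomp).add continuousAt_const

lemma integrandG_aesm {α s₂ r : ℝ} {a b Φ ψ w : ℂ → ℂ} {lam : ℂ} {D : Set ℂ}
    (hπ : s₂ < Real.pi) (hrs : r ≤ s₂)
    (ha : ContinuousOn a (sectorR (-1) 1 s₂)) (hb : ContinuousOn b (sectorR (-1) 1 s₂))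
    (hΦ : Continuous Φ) (hψ : ContinuousOn ψ (sectorR (-1) 1 s₂))
    (hD : IsOpen D) (hw : ContinuousOn w D) (hψD : ∀ u ∈ sectorR (-1) 1 r, ψ u ∈ D)
    {z : ℂ} (hz : z ∈ sectorR (-1) 1 r) :
    AEStronglyMeasurable (fun s : ℝ => integrandG a b Φ ψ w α lam z s)
      (volume.restrict (Set.uIoc (0:ℝ) 1)) := by
  have h1 : (volume : Measure ℝ).restrict (Set.uIoc (0:ℝ) 1) =
      volume.restrict (Set.Ioo (0:ℝ) 1) := by
    rw [Set.uIoc_of_le (by norm_num : (0:ℝ) ≤ 1)]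
    exact (Measure.restrict_congr_set Ioo_ae_eq_Ioc).symm
  rw [h1]
  exact (sliceContOn hπ hrs ha hb hΦ hψ hD hw hψD hz).aestronglyMeasurable measurableSet_Ioo

lemma integrandG_norm_le {α s₂ r A Fb B : ℝ} {a b Φ ψ w : ℂ → ℂ} {lam : ℂ}
    (hα1 : α < 1) (hrs : r ≤ s₂)
    (hA : ∀ v ∈ sectorR (-1) 1 s₂, ‖a v‖ ≤ A) (hB : ∀ v ∈ sectorR (-1) 1 s₂, ‖b v‖ ≤ B)
    (hF : ∀ v ∈ sectorR (-1) 1 r, ‖Φ (w (ψ v))‖ ≤ Fb)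
    {z : ℂ} (hz : z ∈ sectorR (-1) 1 r) {s : ℝ} (hs : s ∈ Set.Ioc (0:ℝ) 1) :
    ‖integrandG a b Φ ψ w α lam z s‖ ≤ (1-s)^(α-1) * (A * Fb + B) + ‖lam‖ := by
  have hmem : -1 + (s:ℂ) * (z + 1) ∈ sectorR (-1) 1 r := line_mem_sectorR hz hs.1 hs.2
  have hmem' : -1 + (s:ℂ) * (z + 1) ∈ sectorR (-1) 1 s₂ := sectorR_mono hrs hmem
  have h0 : (0:ℝ) ≤ ‖a (-1 + (s:ℂ) * (z + 1))‖ := norm_nonneg _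
  have hF' := hF _ hmem
  have hFb : (0:ℝ) ≤ Fb := le_trans (norm_nonneg _) hF'
  have hcoef : ‖(((1 - s) ^ (α - 1) : ℝ) : ℂ)‖ = (1-s)^(α-1) := by
    rw [Complex.norm_real, Real.norm_eq_abs, _root_.abs_of_nonneg (Real.rpow_nonneg (by linarith [hs.2]) _)]
  refine le_trans (norm_add_le _ _) (add_le_add ?_ le_rfl)
  rw [norm_mul, hcoef]
  have hinner : ‖a (-1 + (s:ℂ) * (z + 1)) * Φ (w (ψ (-1 + s * (z + 1)))) +
      b (-1 + (s:ℂ) * (z + 1))‖ ≤ A * Fb + B := by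
    refine le_trans (norm_add_le _ _) (add_le_add ?_ (hB _ hmem'))
    rw [norm_mul]
    exact mul_le_mul (hA _ hmem') hF' (norm_nonneg _) (le_trans h0 (hA _ hmem'))
  exact mul_le_mul_of_nonneg_left hinner (Real.rpow_nonneg (by linarith [hs.2]) _)

lemma integrandG_integrable {α s₂ r A Fb B : ℝ} {a b Φ ψ w : ℂ → ℂ} {lam : ℂ} {D : Set ℂ}
    (hα0 : 0 < α) (hα1 : α < 1) (hπ : s₂ < Real.pi) (hrs : r ≤ s₂)
    (ha : ContinuousOn a (sectorR (-1) 1 s₂)) (hb : ContinuousOn b (sectorR (-1) 1 s₂))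
    (hΦ : Continuous Φ) (hψ : ContinuousOn ψ (sectorR (-1) 1 s₂))
    (hD : IsOpen D) (hw : ContinuousOn w D) (hψD : ∀ u ∈ sectorR (-1) 1 r, ψ u ∈ D)
    (hA : ∀ v ∈ sectorR (-1) 1 s₂, ‖a v‖ ≤ A) (hB : ∀ v ∈ sectorR (-1) 1 s₂, ‖b v‖ ≤ B)
    (hF : ∀ v ∈ sectorR (-1) 1 r, ‖Φ (w (ψ v))‖ ≤ Fb)
    {z : ℂ} (hz : z ∈ sectorR (-1) 1 r) :
    IntervalIntegrable (fun s : ℝ => integrandG a b Φ ψ w α lam z s) volume 0 1 := by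
  have hb1 := boundIntegrable hα0 hα1 (A * Fb + B) ‖lam‖
  rw [intervalIntegrable_iff] at hb1 ⊢
  refine Integrable.mono' hb1 ?_ ?_
  · exact integrandG_aesm hπ hrs ha hb hΦ hψ hD hw hψD hz
  · rw [Set.uIoc_of_le (by norm_num : (0:ℝ) ≤ 1)]
    refine (ae_restrict_iff' measurableSet_Ioc).2 (Filter.Eventually.of_forall ?_)
    intro s hs
    exact integrandG_norm_le hα1 hrs hA hB hF hz hs

theorem stmt_8 (α k s₂ R₀ Λ : ℝ) (lam : ℂ) (a b Φ ψ : ℂ → ℂ) (ω : ℕ → ℂ → ℂ)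
    (hα : α ∈ Set.Ioo (0:ℝ) 1) (hk : 0 < k) (hs₂ : s₂ ∈ Set.Ioo (0:ℝ) 1)
    (hR₀ : ‖lam‖ < R₀)
    (hahol : DifferentiableOn ℂ a (sectorR (-1) 1 s₂))
    (habdd : BddAbove ((fun z => ‖a z‖) '' sectorR (-1) 1 s₂))
    (hbhol : DifferentiableOn ℂ b (sectorR (-1) 1 s₂))
    (hbbdd : BddAbove ((fun z => ‖b z‖) '' sectorR (-1) 1 s₂))
    (hΦ : Differentiable ℂ Φ)
    (hψhol : DifferentiableOn ℂ ψ (sectorR (-1) 1 s₂))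
    (hψsec : ∀ n : ℕ, 1 ≤ n →
      ψ '' sectorN (-1) 1 k s₂ (n + 1) ⊆ sectorN (-1) 1 k s₂ n)
    (hΛdef : Λ = (2 + s₂) ^ α / (α * Real.Gamma α) *
      max ((⨆ z : sectorR (-1) 1 s₂, ‖a z.1‖) *
            (⨆ z : {z : ℂ | Metric.infDist z (Metric.closedBall (0:ℂ) R₀) ≤ s₂}, ‖deriv Φ z.1‖))
          ((⨆ z : sectorR (-1) 1 s₂, ‖a z.1‖) *
            (⨆ z : {z : ℂ | Metric.infDist z (Metric.closedBall (0:ℂ) R₀) ≤ s₂}, ‖Φ z.1‖) +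
            (⨆ z : sectorR (-1) 1 s₂, ‖b z.1‖)))
    (hω1 : ∀ z : ℂ, ω 1 z = 0)
    (hrec : ∀ n : ℕ, 1 ≤ n → ∀ z : ℂ,
      ω (n + 1) z = (z + 1) ^ (α : ℂ) / (Real.Gamma α : ℂ) *
          ∫ s in (0:ℝ)..1, (((1 - s) ^ (α - 1) : ℝ) : ℂ) *
            (a (-1 + s * (z + 1)) * Φ (ω n (ψ (-1 + s * (z + 1)))) +
              b (-1 + s * (z + 1))) + lam)
    (hran : ∀ n : ℕ, 1 ≤ n → ∀ z ∈ sectorN (-1) 1 k s₂ n,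
      Metric.infDist (ω n z) (Metric.closedBall (0:ℂ) R₀) < s₂ * (n : ℝ) ^ (-(1 / k))) :
    (∀ n : ℕ, 2 ≤ n →
      (⨆ z : sectorN (-1) 1 k s₂ (n + 1), ‖ω (n + 1) z.1 - ω n z.1‖) ≤
        Λ * ⨆ z : sectorN (-1) 1 k s₂ n, ‖ω n z.1 - ω (n - 1) z.1‖) ∧
    (Λ ∈ Set.Ioo (0:ℝ) 1 → ∀ n : ℕ, 1 ≤ n →
      (⨆ z : sectorN (-1) 1 k s₂ (n + 1), ‖ω (n + 1) z.1 - ω n z.1‖) ≤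
        Λ ^ (n - 1) * ⨆ z : sectorN (-1) 1 k s₂ 2, ‖ω 2 z.1 - ω 1 z.1‖) := by
  obtain ⟨hα0, hα1⟩ := hα
  obtain ⟨hs0, hs1⟩ := hs₂
  have hπ3 : (3:ℝ) < Real.pi + Real.pi := by linarith [Real.pi_gt_three]
  have hπ : s₂ < Real.pi := by linarith [Real.pi_gt_three]
  have hR0 : 0 ≤ R₀ := le_trans (norm_nonneg lam) hR₀.le
  -- radius facts
  have hrpos : ∀ n : ℕ, 1 ≤ n → 0 < s₂ * (n:ℝ) ^ (-(1/k)) := by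
    intro n hn
    have : (0:ℝ) < (n:ℝ) := by exact_mod_cast hn
    positivity
  have hrle : ∀ n : ℕ, 1 ≤ n → s₂ * (n:ℝ) ^ (-(1/k)) ≤ s₂ := by
    intro n hn
    have h1 : (1:ℝ) ≤ (n:ℝ) := by exact_mod_cast hn
    have := Real.rpow_le_one_of_one_le_of_nonpos h1
      (neg_nonpos.2 (by positivity : (0:ℝ) ≤ 1/k))
    nlinarith
  have hrmono : ∀ n : ℕ, 1 ≤ n →
      s₂ * ((n+1:ℕ):ℝ) ^ (-(1/k)) ≤ s₂ * (n:ℝ) ^ (-(1/k)) := by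
    intro n hn
    have h1 : (0:ℝ) < (n:ℝ) := by exact_mod_cast hn
    have h2 : ((n:ℝ)) ≤ ((n+1:ℕ):ℝ) := by push_cast; linarith
    have := Real.rpow_le_rpow_of_nonpos h1 h2 (neg_nonpos.2 (by positivity : (0:ℝ) ≤ 1/k))
    nlinarith
  have hSsub : ∀ n : ℕ, 1 ≤ n →
      sectorN (-1) 1 k s₂ (n+1) ⊆ sectorN (-1) 1 k s₂ n :=
    fun n hn => sectorR_mono (hrmono n hn)
  have hSbase : ∀ n : ℕ, 1 ≤ n → sectorN (-1) 1 k s₂ n ⊆ sectorR (-1) 1 s₂ :=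
    fun n hn => sectorR_mono (hrle n hn)
  have hSopen : ∀ n : ℕ, 1 ≤ n → IsOpen (sectorN (-1) 1 k s₂ n) :=
    fun n hn => isOpen_sectorR (lt_of_le_of_lt (hrle n hn) hπ)
  have hSne : ∀ n : ℕ, 1 ≤ n → (0:ℂ) ∈ sectorN (-1) 1 k s₂ n :=
    fun n hn => zero_mem_sectorR (hrpos n hn)
  have hTball : {z : ℂ | infDist z (closedBall (0:ℂ) R₀) ≤ s₂} = closedBall (0:ℂ) (s₂+R₀) :=
    T_eq hR0 hs0.le
  have hωball : ∀ n : ℕ, 1 ≤ n → ∀ w ∈ sectorN (-1) 1 k s₂ n,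
      ω n w ∈ closedBall (0:ℂ) (s₂+R₀) := by
    intro n hn w hw
    rw [← hTball]
    exact le_trans (hran n hn w hw).le (hrle n hn)
  -- the sup constants
  have haA : ∀ v ∈ sectorR (-1) 1 s₂, ‖a v‖ ≤ ⨆ z : sectorR (-1) 1 s₂, ‖a z.1‖ := by
    intro v hv
    rw [Set.image_eq_range] at habdd
    exact le_ciSup habdd ⟨v, hv⟩
  have hbB : ∀ v ∈ sectorR (-1) 1 s₂, ‖b v‖ ≤ ⨆ z : sectorR (-1) 1 s₂, ‖b z.1‖ := by
    intro v hv
    rw [Set.image_eq_range] at hbbdd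
    exact le_ciSup hbbdd ⟨v, hv⟩
  have hΦbdd : BddAbove (Set.range fun z :
      {z : ℂ | infDist z (closedBall (0:ℂ) R₀) ≤ s₂} => ‖Φ z.1‖) := by
    have h1 : BddAbove ((fun z => ‖Φ z‖) '' closedBall (0:ℂ) (s₂+R₀)) :=
      ((isCompact_closedBall _ _).image (hΦ.continuous.norm)).bddAbove
    rw [← hTball] at h1
    rw [Set.image_eq_range] at h1
    exact h1
  have hΦF : ∀ v ∈ closedBall (0:ℂ) (s₂+R₀),
      ‖Φ v‖ ≤ ⨆ z : {z : ℂ | infDist z (closedBall (0:ℂ) R₀) ≤ s₂}, ‖Φ z.1‖ := by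
    intro v hv
    exact le_ciSup hΦbdd ⟨v, by rw [hTball]; exact hv⟩
  have hderivC : Continuous (deriv Φ) := (hΦ.contDiff (n := 1)).continuous_deriv le_rfl
  have hΦ'bdd : BddAbove (Set.range fun z :
      {z : ℂ | infDist z (closedBall (0:ℂ) R₀) ≤ s₂} => ‖deriv Φ z.1‖) := by
    have h1 : BddAbove ((fun z => ‖deriv Φ z‖) '' closedBall (0:ℂ) (s₂+R₀)) :=
      ((isCompact_closedBall _ _).image hderivC.norm).bddAbove
    rw [← hTball] at h1
    rw [Set.image_eq_range] at h1
    exact h1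
  have hΦ'F : ∀ v ∈ closedBall (0:ℂ) (s₂+R₀),
      ‖deriv Φ v‖ ≤ ⨆ z : {z : ℂ | infDist z (closedBall (0:ℂ) R₀) ≤ s₂}, ‖deriv Φ z.1‖ := by
    intro v hv
    exact le_ciSup hΦ'bdd ⟨v, by rw [hTball]; exact hv⟩
  -- continuity of the pieces
  have haC : ContinuousOn a (sectorR (-1) 1 s₂) := hahol.continuousOn
  have hbC : ContinuousOn b (sectorR (-1) 1 s₂) := hbhol.continuousOn
  have hψC : ContinuousOn ψ (sectorR (-1) 1 s₂) := hψhol.continuousOn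
  have hΦc : Continuous Φ := hΦ.continuous
  have hπ2 : (1:ℝ) < Real.pi/2 := by linarith [Real.pi_gt_three]
  -- continuity of each ω n on its sector, by induction
  have contOn : ∀ n : ℕ, 1 ≤ n → ContinuousOn (ω n) (sectorN (-1) 1 k s₂ n) := by
    intro n hn
    induction n, hn using Nat.le_induction with
    | base => exact (continuousOn_const (c := (0:ℂ))).congr (fun z _ => hω1 z)
    | succ n hn IH =>
      have hψD : ∀ u ∈ sectorR (-1) 1 (s₂ * ((n+1:ℕ):ℝ) ^ (-(1/k))),
          ψ u ∈ sectorN (-1) 1 k s₂ n := fun u hu => hψsec n hn ⟨u, hu, rfl⟩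
      have hrle' : s₂ * ((n+1:ℕ):ℝ) ^ (-(1/k)) ≤ s₂ := hrle (n+1) (by omega)
      have hFcomp : ∀ v ∈ sectorR (-1) 1 (s₂ * ((n+1:ℕ):ℝ) ^ (-(1/k))),
          ‖Φ (ω n (ψ v))‖ ≤ ⨆ z : {z : ℂ | infDist z (closedBall (0:ℂ) R₀) ≤ s₂}, ‖Φ z.1‖ :=
        fun v hv => hΦF _ (hωball n hn _ (hψD v hv))
      intro z₀ hz₀
      have hz₀' : z₀ ∈ sectorR (-1) 1 (s₂ * ((n+1:ℕ):ℝ) ^ (-(1/k))) := hz₀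
      apply ContinuousAt.continuousWithinAt
      have heq : ω (n+1) = fun z => (z + 1) ^ (α : ℂ) / (Real.Gamma α : ℂ) *
          ∫ s in (0:ℝ)..1, integrandG a b Φ ψ (ω n) α lam z s :=
        funext (fun z => hrec n hn z)
      rw [heq]
      have hsl : (z₀ + 1) ∈ Complex.slitPlane :=
        Complex.mem_slitPlane_iff.2 (Or.inl (re_add_one_pos (by nlinarith) hz₀'))
      have h1 : ContinuousAt (fun z : ℂ => (z+1) ^ (α:ℂ)) z₀ :=
        Filter.Tendsto.comp (continuousAt_cpow_const hsl)
          (by fun_prop : ContinuousAt (fun z : ℂ => z + 1) z₀)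
      have h2 : ContinuousAt
          (fun z : ℂ => ∫ s in (0:ℝ)..1, integrandG a b Φ ψ (ω n) α lam z s) z₀ := by
        apply intervalIntegral.continuousAt_of_dominated_interval
          (bound := fun s => (1-s)^(α-1) *
            ((⨆ z : sectorR (-1) 1 s₂, ‖a z.1‖) *
              (⨆ z : {z : ℂ | infDist z (closedBall (0:ℂ) R₀) ≤ s₂}, ‖Φ z.1‖) +
              (⨆ z : sectorR (-1) 1 s₂, ‖b z.1‖)) + ‖lam‖)
        · filter_upwards [((hSopen (n+1) (by omega)).mem_nhds hz₀)] with z hz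
          exact integrandG_aesm hπ hrle' haC hbC hΦc hψC (hSopen n hn) IH hψD hz
        · filter_upwards [((hSopen (n+1) (by omega)).mem_nhds hz₀)] with z hz
          refine Filter.Eventually.of_forall (fun t ht => ?_)
          rw [Set.uIoc_of_le (by norm_num : (0:ℝ) ≤ 1)] at ht
          exact integrandG_norm_le hα1 hrle' haA hbB hFcomp hz ht
        · exact boundIntegrable hα0 hα1 _ _
        · refine Filter.Eventually.of_forall (fun t ht => ?_)
          rw [Set.uIoc_of_le (by norm_num : (0:ℝ) ≤ 1)] at ht
          exact paramContAt hπ hrle' haC hbC hΦc hψC (hSopen n hn) IH hψD ht hz₀'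
      exact (h1.div_const _).mul h2
  set A := (⨆ z : sectorR (-1) 1 s₂, ‖a z.1‖) with hAdef
  set Bb := (⨆ z : sectorR (-1) 1 s₂, ‖b z.1‖) with hBdef
  set FF := (⨆ z : {z : ℂ | infDist z (closedBall (0:ℂ) R₀) ≤ s₂}, ‖Φ z.1‖) with hFFdef
  set FD := (⨆ z : {z : ℂ | infDist z (closedBall (0:ℂ) R₀) ≤ s₂}, ‖deriv Φ z.1‖) with hFDdef
  have hΓ : 0 < Real.Gamma α := Real.Gamma_pos_of_pos hα0
  have hA0 : 0 ≤ A := le_trans (norm_nonneg _) (haA 0 (zero_mem_sectorR hs0))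
  have hFD0 : 0 ≤ FD :=
    le_trans (norm_nonneg _) (hΦ'F 0 (mem_closedBall_self (by positivity)))
  have hcoef0 : 0 ≤ (2 + s₂) ^ α / (α * Real.Gamma α) := by positivity
  -- the key pointwise estimate
  have key : ∀ m : ℕ, 1 ≤ m → ∀ z ∈ sectorN (-1) 1 k s₂ (m+2),
      ‖ω (m+2) z - ω (m+1) z‖ ≤
        Λ * ⨆ w : sectorN (-1) 1 k s₂ (m+1), ‖ω (m+1) w.1 - ω m w.1‖ := by
    intro m hm z hz
    set M := ⨆ w : sectorN (-1) 1 k s₂ (m+1), ‖ω (m+1) w.1 - ω m w.1‖ with hMdef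
    have hz1 : z ∈ sectorN (-1) 1 k s₂ (m+1) := hSsub (m+1) (by omega) hz
    have hMbdd : BddAbove (Set.range
        fun w : sectorN (-1) 1 k s₂ (m+1) => ‖ω (m+1) w.1 - ω m w.1‖) := by
      refine ⟨2*(s₂+R₀), ?_⟩
      rintro x ⟨w, rfl⟩
      have h1 := hωball (m+1) (by omega) w.1 w.2
      have h2 := hωball m hm w.1 (hSsub m hm w.2)
      rw [mem_closedBall_zero_iff] at h1 h2
      calc ‖ω (m+1) w.1 - ω m w.1‖ ≤ ‖ω (m+1) w.1‖ + ‖ω m w.1‖ := norm_sub_le _ _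
        _ ≤ 2*(s₂+R₀) := by linarith
    have hM0 : 0 ≤ M :=
      le_trans (norm_nonneg _) (le_ciSup hMbdd ⟨0, hSne (m+1) (by omega)⟩)
    have hMle : ∀ v ∈ sectorN (-1) 1 k s₂ (m+1), ‖ω (m+1) v - ω m v‖ ≤ M :=
      fun v hv => le_ciSup hMbdd ⟨v, hv⟩
    have hψD2 : ∀ u ∈ sectorR (-1) 1 (s₂ * ((m+2:ℕ):ℝ) ^ (-(1/k))),
        ψ u ∈ sectorN (-1) 1 k s₂ (m+1) := fun u hu => hψsec (m+1) (by omega) ⟨u, hu, rfl⟩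
    have hψD1 : ∀ u ∈ sectorR (-1) 1 (s₂ * ((m+1:ℕ):ℝ) ^ (-(1/k))),
        ψ u ∈ sectorN (-1) 1 k s₂ m := fun u hu => hψsec m hm ⟨u, hu, rfl⟩
    have hrle2 : s₂ * ((m+2:ℕ):ℝ) ^ (-(1/k)) ≤ s₂ := hrle (m+2) (by omega)
    have hrle1 : s₂ * ((m+1:ℕ):ℝ) ^ (-(1/k)) ≤ s₂ := hrle (m+1) (by omega)
    have hF2 : ∀ v ∈ sectorR (-1) 1 (s₂ * ((m+2:ℕ):ℝ) ^ (-(1/k))),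
        ‖Φ (ω (m+1) (ψ v))‖ ≤ FF :=
      fun v hv => hΦF _ (hωball (m+1) (by omega) _ (hψD2 v hv))
    have hF1 : ∀ v ∈ sectorR (-1) 1 (s₂ * ((m+1:ℕ):ℝ) ^ (-(1/k))),
        ‖Φ (ω m (ψ v))‖ ≤ FF :=
      fun v hv => hΦF _ (hωball m hm _ (hψD1 v hv))
    have int2 : IntervalIntegrable
        (fun s => integrandG a b Φ ψ (ω (m+1)) α lam z s) volume 0 1 :=
      integrandG_integrable hα0 hα1 hπ hrle2 haC hbC hΦc hψC (hSopen (m+1) (by omega))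
        (contOn (m+1) (by omega)) hψD2 haA hbB hF2 hz
    have int1 : IntervalIntegrable
        (fun s => integrandG a b Φ ψ (ω m) α lam z s) volume 0 1 :=
      integrandG_integrable hα0 hα1 hπ hrle1 haC hbC hΦc hψC (hSopen m hm)
        (contOn m hm) hψD1 haA hbB hF1 hz1
    have e2 : ω (m+2) z = (z+1)^(α:ℂ)/(Real.Gamma α : ℂ) *
        ∫ s in (0:ℝ)..1, integrandG a b Φ ψ (ω (m+1)) α lam z s := hrec (m+1) (by omega) z
    have e1 : ω (m+1) z = (z+1)^(α:ℂ)/(Real.Gamma α : ℂ) *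
        ∫ s in (0:ℝ)..1, integrandG a b Φ ψ (ω m) α lam z s := hrec m hm z
    have ediff : ω (m+2) z - ω (m+1) z = (z+1)^(α:ℂ)/(Real.Gamma α : ℂ) *
        ∫ s in (0:ℝ)..1, (integrandG a b Φ ψ (ω (m+1)) α lam z s -
          integrandG a b Φ ψ (ω m) α lam z s) := by
      rw [e2, e1, intervalIntegral.integral_sub int2 int1]; ring
    have hpt : ∀ s ∈ Set.Ioc (0:ℝ) 1,
        ‖integrandG a b Φ ψ (ω (m+1)) α lam z s - integrandG a b Φ ψ (ω m) α lam z s‖ ≤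
          (1-s)^(α-1) * (A * (FD * M)) := by
      intro s hs
      have hmem : -1 + (s:ℂ)*(z+1) ∈ sectorR (-1) 1 (s₂ * ((m+2:ℕ):ℝ) ^ (-(1/k))) :=
        line_mem_sectorR hz hs.1 hs.2
      have hmem' : -1 + (s:ℂ)*(z+1) ∈ sectorR (-1) 1 s₂ := sectorR_mono hrle2 hmem
      have hψm : ψ (-1 + (s:ℂ)*(z+1)) ∈ sectorN (-1) 1 k s₂ (m+1) := hψD2 _ hmem
      have hu1 : ω (m+1) (ψ (-1 + (s:ℂ)*(z+1))) ∈ closedBall (0:ℂ) (s₂+R₀) :=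
        hωball (m+1) (by omega) _ hψm
      have hu2 : ω m (ψ (-1 + (s:ℂ)*(z+1))) ∈ closedBall (0:ℂ) (s₂+R₀) :=
        hωball m hm _ (hSsub m hm hψm)
      have hdiffeq : integrandG a b Φ ψ (ω (m+1)) α lam z s -
          integrandG a b Φ ψ (ω m) α lam z s =
          (((1 - s) ^ (α - 1) : ℝ) : ℂ) * (a (-1 + s * (z + 1)) *
            (Φ (ω (m+1) (ψ (-1 + s * (z + 1)))) - Φ (ω m (ψ (-1 + s * (z + 1)))))) := by
        simp only [integrandG]; ring
      rw [hdiffeq, norm_mul, norm_mul]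
      have hcoefn : ‖(((1 - s) ^ (α - 1) : ℝ) : ℂ)‖ = (1-s)^(α-1) := by
        rw [Complex.norm_real, Real.norm_eq_abs,
          _root_.abs_of_nonneg (Real.rpow_nonneg (by linarith [hs.2]) _)]
      have hmvt : ‖Φ (ω (m+1) (ψ (-1 + (s:ℂ) * (z + 1)))) -
          Φ (ω m (ψ (-1 + (s:ℂ) * (z + 1))))‖ ≤ FD * M := by
        have h1 : ‖Φ (ω (m+1) (ψ (-1 + (s:ℂ) * (z + 1)))) -
            Φ (ω m (ψ (-1 + (s:ℂ) * (z + 1))))‖ ≤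
            FD * ‖ω (m+1) (ψ (-1 + (s:ℂ) * (z + 1))) - ω m (ψ (-1 + (s:ℂ) * (z + 1)))‖ :=
          Convex.norm_image_sub_le_of_norm_deriv_le (fun x _ => hΦ.differentiableAt)
            (fun x hx => hΦ'F x hx) (convex_closedBall _ _) hu2 hu1
        exact le_trans h1 (mul_le_mul_of_nonneg_left (hMle _ hψm) hFD0)
      rw [hcoefn]
      have hstep : ‖a (-1 + (s:ℂ) * (z + 1))‖ *
          ‖Φ (ω (m+1) (ψ (-1 + (s:ℂ) * (z + 1)))) -
            Φ (ω m (ψ (-1 + (s:ℂ) * (z + 1))))‖ ≤ A * (FD * M) :=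
        mul_le_mul (haA _ hmem') hmvt (norm_nonneg _) hA0
      exact mul_le_mul_of_nonneg_left hstep (Real.rpow_nonneg (by linarith [hs.2]) _)
    have hbi : IntervalIntegrable (fun s : ℝ => (1-s)^(α-1) * (A*(FD*M))) volume 0 1 := by
      simpa using boundIntegrable hα0 hα1 (A*(FD*M)) 0
    have hni : ‖∫ s in (0:ℝ)..1, (integrandG a b Φ ψ (ω (m+1)) α lam z s -
        integrandG a b Φ ψ (ω m) α lam z s)‖ ≤
        |∫ s in (0:ℝ)..1, (1-s)^(α-1) * (A*(FD*M))| := by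
      refine intervalIntegral.norm_integral_le_abs_of_norm_le ?_ hbi
      rw [Set.uIoc_of_le (by norm_num : (0:ℝ) ≤ 1)]
      exact (ae_restrict_iff' measurableSet_Ioc).2 (Filter.Eventually.of_forall hpt)
    have hval : (∫ s in (0:ℝ)..1, (1-s)^(α-1) * (A*(FD*M))) = (A*(FD*M))/α :=
      boundIntegral hα0 hα1 _
    have hCnn : 0 ≤ (A*(FD*M))/α :=
      div_nonneg (mul_nonneg hA0 (mul_nonneg hFD0 hM0)) hα0.le
    obtain ⟨habslt, hne⟩ := abs_add_one_lt hz
    have hcle : ‖(z+1)^(α:ℂ)/(Real.Gamma α : ℂ)‖ ≤ (2+s₂)^α / Real.Gamma α := by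
      rw [norm_div, Complex.norm_real, Real.norm_eq_abs, _root_.abs_of_pos hΓ]
      have hnum : ‖(z+1)^(α:ℂ)‖ ≤ (2+s₂)^α := by
        rw [Complex.norm_cpow_of_ne_zero hne]
        simp only [Complex.ofReal_re, Complex.ofReal_im, mul_zero, Real.exp_zero, div_one]
        apply Real.rpow_le_rpow (norm_nonneg _) ?_ hα0.le
        have h5 : s₂ * ((m+2:ℕ):ℝ) ^ (-(1/k)) ≤ s₂ := hrle2
        have h6 : ‖z+1‖ < 2 + s₂ * ((m+2:ℕ):ℝ) ^ (-(1/k)) := habslt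
        linarith
      have := mul_le_mul_of_nonneg_right hnum (inv_nonneg.2 hΓ.le)
      simpa [div_eq_mul_inv] using this
    rw [ediff, norm_mul]
    have hfin1 : ‖(z+1)^(α:ℂ)/(Real.Gamma α : ℂ)‖ *
        ‖∫ s in (0:ℝ)..1, (integrandG a b Φ ψ (ω (m+1)) α lam z s -
          integrandG a b Φ ψ (ω m) α lam z s)‖ ≤
        ((2+s₂)^α/Real.Gamma α) * ((A*(FD*M))/α) :=
      mul_le_mul hcle (le_trans hni (by rw [hval, _root_.abs_of_nonneg hCnn]))
        (norm_nonneg _) (by positivity)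
    refine le_trans hfin1 ?_
    have heq2 : (2+s₂)^α/Real.Gamma α * ((A*(FD*M))/α) =
        ((2+s₂)^α/(α*Real.Gamma α)) * (A*FD) * M := by
      field_simp
    rw [heq2, hΛdef]
    calc ((2+s₂)^α/(α*Real.Gamma α)) * (A*FD) * M
        ≤ ((2+s₂)^α/(α*Real.Gamma α)) * max (A*FD) (A*FF+Bb) * M :=
          mul_le_mul_of_nonneg_right
            (mul_le_mul_of_nonneg_left (le_max_left _ _) hcoef0) hM0
      _ = (2+s₂)^α/(α*Real.Gamma α) * max (A*FD) (A*FF+Bb) * M := rfl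
  -- part 1
  have part1 : ∀ n : ℕ, 2 ≤ n →
      (⨆ z : sectorN (-1) 1 k s₂ (n + 1), ‖ω (n + 1) z.1 - ω n z.1‖) ≤
        Λ * ⨆ z : sectorN (-1) 1 k s₂ n, ‖ω n z.1 - ω (n - 1) z.1‖ := by
    intro n hn
    obtain ⟨m, rfl⟩ : ∃ m, n = m + 2 := ⟨n - 2, by omega⟩
    haveI : Nonempty ↥(sectorN (-1) 1 k s₂ (m+2+1)) := ⟨⟨0, hSne (m+3) (by omega)⟩⟩
    refine ciSup_le fun z => ?_
    exact key (m+1) (by omega) z.1 z.2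
  refine ⟨part1, ?_⟩
  rintro ⟨hΛ0, hΛ1⟩ n hn
  induction n, hn using Nat.le_induction with
  | base => norm_num
  | succ n hn IH =>
    haveI : Nonempty ↥(sectorN (-1) 1 k s₂ (n+1+1)) := ⟨⟨0, hSne (n+2) (by omega)⟩⟩
    have h1 : (⨆ z : sectorN (-1) 1 k s₂ (n+1+1), ‖ω (n+1+1) z.1 - ω (n+1) z.1‖) ≤
        Λ * ⨆ w : sectorN (-1) 1 k s₂ (n+1), ‖ω (n+1) w.1 - ω n w.1‖ :=
      ciSup_le fun z => key n hn z.1 z.2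
    have h2 : Λ * (⨆ w : sectorN (-1) 1 k s₂ (n+1), ‖ω (n+1) w.1 - ω n w.1‖) ≤
        Λ * (Λ^(n-1) * ⨆ z : sectorN (-1) 1 k s₂ 2, ‖ω 2 z.1 - ω 1 z.1‖) :=
      mul_le_mul_of_nonneg_left IH hΛ0.le
    have hxp : Λ * Λ ^ (n-1) = Λ ^ n := by
      conv_rhs => rw [show n = n-1+1 by omega]
      rw [pow_succ]; ring
    refine le_trans h1 (le_trans h2 (le_of_eq ?_))
    rw [← mul_assoc, hxp]
    congr 2
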